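/- Placing two facilities at the two candidate locations closest to the median of the reported positions is strategyproof for agents whose cost is the maximum of their distances to the two facilities: let ι be a nonempty finite set, C ⊆ ℝ a finite set with |C| ≥ 2, and for x : ι → ℝ let m = med(x) be the ⌈|ι|/2⌉-th smallest value among the x_i, and define h(x) = (t(m), s(m)), where t(p) is the smallest element of C minimizing |p − c| over c ∈ C and s(p) is the smallest element of C \ {t(p)} minimizing |p − c| over c ∈ C \ {t(p)}. Then for every x : ι → ℝ, every i ∈ ι, and every x' ∈ ℝ, writing h(x) = (w₁,w₂) and h(x[i ↦ x']) = (w₁',w₂'), one has max(|x_i − w₁|, |x_i − w₂|) ≤ max(|x_i − w₁'|, |x_i − w₂'|). -/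

import Mathlib

open Finset

/-- The smallest element of `C` minimizing the distance to `p`. -/
noncomputable def tloc (C : Finset ℝ) (p : ℝ) : ℝ :=
  WithTop.untopD 0 ((C.filter fun c => ∀ c' ∈ C, |p - c| ≤ |p - c'|).min)

/-- The smallest element of `C \ {tloc C p}` minimizing the distance to `p`. -/
noncomputable def sloc (C : Finset ℝ) (p : ℝ) : ℝ :=
  tloc (C.erase (tloc C p)) p

/-- The `⌈n/2⌉`-th smallest element of a multiset of reals (0 if empty). -/
noncomputable def medOf (l : Multiset ℝ) : ℝ :=
  (l.sort (· ≤ ·)).getD ((Multiset.card l + 1) / 2 - 1) 0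

/-- The median position of the agents in `S` with positions `x`. -/
noncomputable def medianPos (S : Finset ℕ) (x : ℕ → ℝ) : ℝ :=
  medOf (S.val.map x)

/-- The Conditional-Median mechanism, assuming facility 1 is (weakly) more popular. -/
noncomputable def condMedian (x : ℕ → ℝ) (N1 N2 : Finset ℕ) (C : Finset ℝ) : ℝ × ℝ :=
  if (N1 ∩ N2).card ≤ (N1 \ N2).card then
    let m1 := medianPos (N1 \ N2) x
    let m2 := medianPos N2 x
    let w1 := tloc C m1
    (w1, if tloc C m2 ≠ w1 then tloc C m2 else sloc C m2)
  else
    let m12 := medianPos (N1 ∩ N2) x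
    (tloc C m12, sloc C m12)

/-- The output of the Conditional-Median mechanism (roles swapped if `|N₂| > |N₁|`). -/
noncomputable def mechOutput (x : ℕ → ℝ) (N1 N2 : Finset ℕ) (C : Finset ℝ) : ℝ × ℝ :=
  if N2.card ≤ N1.card then condMedian x N1 N2 C
  else (condMedian x N2 N1 C).swap

/-- The cost of agent `i` at solution `y`: the distance to the farthest approved facility. -/
noncomputable def cost (x : ℕ → ℝ) (N1 N2 : Finset ℕ) (i : ℕ) (y : ℝ × ℝ) : ℝ :=
  if i ∈ N1 then
    if i ∈ N2 then max |x i - y.1| |x i - y.2| else |x i - y.1|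
  else |x i - y.2|

/-- The social cost. -/
noncomputable def SC (x : ℕ → ℝ) (N1 N2 N : Finset ℕ) (y : ℝ × ℝ) : ℝ :=
  ∑ i ∈ N, cost x N1 N2 i y

/-- The max cost. -/
noncomputable def MC (x : ℕ → ℝ) (N1 N2 N : Finset ℕ) (hN : N.Nonempty) (y : ℝ × ℝ) : ℝ :=
  N.sup' hN fun i => cost x N1 N2 i y

lemma tloc_spec (C : Finset ℝ) (hC : C.Nonempty) (p : ℝ) :
    tloc C p ∈ C ∧ (∀ c ∈ C, |p - tloc C p| ≤ |p - c|) ∧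
      (∀ c ∈ C, (∀ c' ∈ C, |p - c| ≤ |p - c'|) → tloc C p ≤ c) := by
  classical
  obtain ⟨b, hb, hbmin⟩ := C.exists_min_image (fun c => |p - c|) hC
  have hF : (C.filter fun c => ∀ c' ∈ C, |p - c| ≤ |p - c'|).Nonempty :=
    ⟨b, by simp only [Finset.mem_filter]; exact ⟨hb, hbmin⟩⟩
  set F := C.filter fun c => ∀ c' ∈ C, |p - c| ≤ |p - c'| with hFdef
  have htl : tloc C p = F.min' hF := by
    rw [tloc, ← Finset.coe_min' hF]
    rfl
  have hmem := F.min'_mem hF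
  rw [← htl] at hmem
  rw [hFdef, Finset.mem_filter] at hmem
  refine ⟨hmem.1, hmem.2, ?_⟩
  intro c hc hcmin
  rw [htl]
  exact F.min'_le c (Finset.mem_filter.mpr ⟨hc, hcmin⟩)

lemma erase_tloc_nonempty (C : Finset ℝ) (hC : 2 ≤ C.card) (p : ℝ) :
    (C.erase (tloc C p)).Nonempty := by
  have hne : C.Nonempty := Finset.card_pos.mp (by omega)
  have ht := (tloc_spec C hne p).1
  have : 1 ≤ (C.erase (tloc C p)).card := by
    rw [Finset.card_erase_of_mem ht]; omega
  exact Finset.card_pos.mp this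

lemma sloc_spec (C : Finset ℝ) (hC : 2 ≤ C.card) (p : ℝ) :
    sloc C p ∈ C ∧ sloc C p ≠ tloc C p ∧
      (∀ c ∈ C, c ≠ tloc C p → |p - sloc C p| ≤ |p - c|) ∧
      (∀ c ∈ C, c ≠ tloc C p → (∀ c' ∈ C, c' ≠ tloc C p → |p - c| ≤ |p - c'|) →
        sloc C p ≤ c) := by
  classical
  obtain ⟨h1, h2, h3⟩ := tloc_spec (C.erase (tloc C p)) (erase_tloc_nonempty C hC p) p
  rw [Finset.mem_erase] at h1
  refine ⟨h1.2, h1.1, ?_, ?_⟩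
  · intro c hc hct
    exact h2 c (Finset.mem_erase.mpr ⟨hct, hc⟩)
  · intro c hc hct hmin
    refine h3 c (Finset.mem_erase.mpr ⟨hct, hc⟩) ?_
    intro c' hc'
    rw [Finset.mem_erase] at hc'
    exact hmin c' hc'.2 hc'.1

lemma pair_sel (C : Finset ℝ) (hC : 2 ≤ C.card) (p : ℝ) (w z : ℝ)
    (hw : w = tloc C p ∨ w = sloc C p) (hz : z ∈ C)
    (hzt : z ≠ tloc C p) (hzs : z ≠ sloc C p) :
    |p - w| ≤ |p - z| ∧ (|p - w| = |p - z| → w < z) := by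
  have hne : C.Nonempty := Finset.card_pos.mp (by omega)
  obtain ⟨ht1, ht2, ht3⟩ := tloc_spec C hne p
  obtain ⟨hs1, hs2, hs3, hs4⟩ := sloc_spec C hC p
  rcases hw with rfl | rfl
  · refine ⟨ht2 z hz, fun heq => ?_⟩
    have : tloc C p ≤ z := ht3 z hz (fun c' hc' => heq ▸ ht2 c' hc')
    exact lt_of_le_of_ne this (Ne.symm hzt)
  · refine ⟨hs3 z hz hzt, fun heq => ?_⟩
    have : sloc C p ≤ z := hs4 z hz hzt (fun c' hc' hc't => heq ▸ hs3 c' hc' hc't)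
    exact lt_of_le_of_ne this (Ne.symm hzs)

lemma abs_mono_aux {v u r1 r2 : ℝ} (hvu : v ≤ u) (hr : r1 ≤ r2) :
    |r1 - v| - |r1 - u| ≤ |r2 - v| - |r2 - u| := by
  rcases abs_cases (r1 - v) with ⟨h1, h1'⟩ | ⟨h1, h1'⟩ <;>
  rcases abs_cases (r1 - u) with ⟨h2, h2'⟩ | ⟨h2, h2'⟩ <;>
  rcases abs_cases (r2 - v) with ⟨h3, h3'⟩ | ⟨h3, h3'⟩ <;>
  rcases abs_cases (r2 - u) with ⟨h4, h4'⟩ | ⟨h4, h4'⟩ <;>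
  linarith

lemma sorted_getElem_mono {L : List ℝ} (hL : L.Pairwise (· ≤ ·)) {k1 k2 : ℕ}
    (h1 : k1 < L.length) (h2 : k2 < L.length) (hle : k1 ≤ k2) : L[k1] ≤ L[k2] := by
  rcases eq_or_lt_of_le hle with rfl | hlt
  · exact le_refl _
  · exact List.pairwise_iff_getElem.mp hL k1 k2 h1 h2 hlt

lemma sorted_countP_ge {L : List ℝ} (hL : L.Pairwise (· ≤ ·)) {j : ℕ} (hj : j < L.length)
    (b : ℝ → Bool) (hdc : ∀ y z : ℝ, y ≤ z → b z → b y)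
    (h : b L[j]) : j + 1 ≤ L.countP b := by
  have hsub : ∀ y ∈ L.take (j+1), b y := by
    intro y hy
    obtain ⟨k, hk, hky⟩ := List.getElem_of_mem hy
    have hk' : k < j + 1 := by
      have := List.length_take (i := j+1) (l := L); omega
    have hkL : k < L.length := by omega
    have : (L.take (j+1))[k] = L[k] := List.getElem_take ..
    rw [this] at hky
    exact hdc _ _ (hky ▸ sorted_getElem_mono hL hkL hj (by omega)) h
  calc j + 1 = (L.take (j+1)).length := by rw [List.length_take]; omega
  _ = (L.take (j+1)).countP b := (List.countP_eq_length.mpr hsub).symm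
  _ ≤ L.countP b := (List.take_sublist _ _).countP_le (p := b)

lemma sorted_countP_le {L : List ℝ} (hL : L.Pairwise (· ≤ ·)) {j : ℕ} (hj : j < L.length)
    (b : ℝ → Bool) (hdc : ∀ y z : ℝ, y ≤ z → b z → b y)
    (h : ¬ b L[j]) : L.countP b ≤ j := by
  have hsplit : L.countP b = (L.take j).countP b + (L.drop j).countP b := by
    rw [← List.countP_append, List.take_append_drop]
  have hdrop : (L.drop j).countP b = 0 := by
    rw [List.countP_eq_zero]
    intro y hy
    obtain ⟨k, hk, hky⟩ := List.getElem_of_mem hy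
    have hlen := List.length_drop (i := j) (l := L)
    have hjk : j + k < L.length := by omega
    have : (L.drop j)[k] = L[j + k] := List.getElem_drop
    rw [this] at hky
    intro hb
    exact h (hdc _ _ (sorted_getElem_mono hL hj hjk (by omega)) (hky ▸ hb))
  have htake : (L.take j).countP b ≤ j := by
    calc (L.take j).countP b ≤ (L.take j).length := List.countP_le_length
    _ ≤ j := by rw [List.length_take]; omega
  omega

lemma medOf_getElem (t : Multiset ℝ) (hj : (Multiset.card t + 1) / 2 - 1 < (t.sort (· ≤ ·)).length) :
    medOf t = (t.sort (· ≤ ·))[(Multiset.card t + 1) / 2 - 1] := by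
  rw [medOf, List.getD_eq_getElem _ _ hj]

lemma countP_sort (t : Multiset ℝ) (p : ℝ → Prop) [DecidablePred p] :
    (t.sort (· ≤ ·)).countP (fun y => decide (p y)) = Multiset.countP p t := by
  conv_rhs => rw [← Multiset.sort_eq t (· ≤ ·)]
  exact (Multiset.coe_countP _ _).symm

lemma medOf_replace_lt (s : Multiset ℝ) (a a' : ℝ)
    (ha : a < medOf (a ::ₘ s)) : medOf (a ::ₘ s) ≤ medOf (a' ::ₘ s) := by
  classical
  set m := medOf (a ::ₘ s) with hm
  set n := Multiset.card s + 1 with hn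
  have hc1 : Multiset.card (a ::ₘ s) = n := by simp [hn]
  have hc2 : Multiset.card (a' ::ₘ s) = n := by simp [hn]
  set j := (n + 1) / 2 - 1 with hj
  have hjn : j < n := by omega
  have hjL : j < ((a ::ₘ s).sort (· ≤ ·)).length := by rw [Multiset.length_sort, hc1]; exact hjn
  have hjL' : j < ((a' ::ₘ s).sort (· ≤ ·)).length := by rw [Multiset.length_sort, hc2]; exact hjn
  have hmL : m = ((a ::ₘ s).sort (· ≤ ·))[j] := by
    rw [hm, medOf_getElem _ (by rw [hc1]; exact hjL)]
    congr 1
    rw [hc1]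
  set b : ℝ → Bool := fun y => decide (y < m) with hb
  have hdc : ∀ y z : ℝ, y ≤ z → b z → b y := by
    intro y z h1 h2
    simp only [hb, decide_eq_true_eq] at *
    linarith
  have hcL : ((a ::ₘ s).sort (· ≤ ·)).countP b ≤ j := by
    refine sorted_countP_le (Multiset.pairwise_sort _ _) hjL b hdc ?_
    rw [← hmL]
    simp [hb]
  have hcntrel : ((a' ::ₘ s).sort (· ≤ ·)).countP b ≤ ((a ::ₘ s).sort (· ≤ ·)).countP b := by
    rw [hb, countP_sort _ (fun y => y < m), countP_sort _ (fun y => y < m),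
      Multiset.countP_cons, Multiset.countP_cons]
    simp only [ha, if_true]
    split <;> omega
  by_contra hcon
  push_neg at hcon
  have hlt : ((a' ::ₘ s).sort (· ≤ ·))[j] < m := by
    have : medOf (a' ::ₘ s) = ((a' ::ₘ s).sort (· ≤ ·))[j] := by
      rw [medOf_getElem _ (by rw [hc2]; exact hjL')]
      congr 1
      rw [hc2]
    rw [← this]; exact hcon
  have := sorted_countP_ge (Multiset.pairwise_sort _ _) hjL' b hdc (by simp [hb]; exact hlt)
  omega

lemma medOf_replace_gt (s : Multiset ℝ) (a a' : ℝ)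
    (ha : medOf (a ::ₘ s) < a) : medOf (a' ::ₘ s) ≤ medOf (a ::ₘ s) := by
  classical
  set m := medOf (a ::ₘ s) with hm
  set n := Multiset.card s + 1 with hn
  have hc1 : Multiset.card (a ::ₘ s) = n := by simp [hn]
  have hc2 : Multiset.card (a' ::ₘ s) = n := by simp [hn]
  set j := (n + 1) / 2 - 1 with hj
  have hjn : j < n := by omega
  have hjL : j < ((a ::ₘ s).sort (· ≤ ·)).length := by rw [Multiset.length_sort, hc1]; exact hjn
  have hjL' : j < ((a' ::ₘ s).sort (· ≤ ·)).length := by rw [Multiset.length_sort, hc2]; exact hjn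
  have hmL : m = ((a ::ₘ s).sort (· ≤ ·))[j] := by
    rw [hm, medOf_getElem _ (by rw [hc1]; exact hjL)]
    congr 1
    rw [hc1]
  set b : ℝ → Bool := fun y => decide (y ≤ m) with hb
  have hdc : ∀ y z : ℝ, y ≤ z → b z → b y := by
    intro y z h1 h2
    simp only [hb, decide_eq_true_eq] at *
    linarith
  have hcL : j + 1 ≤ ((a ::ₘ s).sort (· ≤ ·)).countP b := by
    refine sorted_countP_ge (Multiset.pairwise_sort _ _) hjL b hdc ?_
    rw [← hmL]
    simp [hb]
  have hcntrel : ((a ::ₘ s).sort (· ≤ ·)).countP b ≤ ((a' ::ₘ s).sort (· ≤ ·)).countP b := by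
    have hna : ¬ (a ≤ m) := not_le.mpr ha
    rw [hb, countP_sort _ (fun y => y ≤ m), countP_sort _ (fun y => y ≤ m),
      Multiset.countP_cons, Multiset.countP_cons]
    simp only [hna, if_false]
    split <;> omega
  by_contra hcon
  push_neg at hcon
  have hlt : m < ((a' ::ₘ s).sort (· ≤ ·))[j] := by
    have : medOf (a' ::ₘ s) = ((a' ::ₘ s).sort (· ≤ ·))[j] := by
      rw [medOf_getElem _ (by rw [hc2]; exact hjL')]
      congr 1
      rw [hc2]
    rw [← this]; exact hcon
  have := sorted_countP_le (Multiset.pairwise_sort _ _) hjL' b hdc (by simp [hb]; exact hlt)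
  omega

lemma core (C : Finset ℝ) (hC : 2 ≤ C.card) (a p q : ℝ)
    (h : a ≤ p ∧ p ≤ q ∨ q ≤ p ∧ p ≤ a) :
    max |a - tloc C p| |a - sloc C p| ≤ max |a - tloc C q| |a - sloc C q| := by
  classical
  have hne : C.Nonempty := Finset.card_pos.mp (by omega)
  by_contra hcon
  push_neg at hcon
  -- pick u achieving the max at p
  obtain ⟨u, hu, humax⟩ : ∃ u, (u = tloc C p ∨ u = sloc C p) ∧
      max |a - tloc C p| |a - sloc C p| = |a - u| := by
    rcases max_choice |a - tloc C p| |a - sloc C p| with h' | h'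
    · exact ⟨tloc C p, Or.inl rfl, h'⟩
    · exact ⟨sloc C p, Or.inr rfl, h'⟩
  rw [humax] at hcon
  have htq : |a - tloc C q| < |a - u| := lt_of_le_of_lt (le_max_left _ _) hcon
  have hsq : |a - sloc C q| < |a - u| := lt_of_le_of_lt (le_max_right _ _) hcon
  have hut : u ≠ tloc C q := fun h' => by rw [h'] at htq; exact lt_irrefl _ htq
  have hus : u ≠ sloc C q := fun h' => by rw [h'] at hsq; exact lt_irrefl _ hsq
  have hqsne : sloc C q ≠ tloc C q := (sloc_spec C hC q).2.1
  -- pick v in pair(q) not in pair(p)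
  obtain ⟨v, hv, hvt, hvs⟩ : ∃ v, (v = tloc C q ∨ v = sloc C q) ∧
      v ≠ tloc C p ∧ v ≠ sloc C p := by
    by_cases h1 : tloc C q ≠ tloc C p ∧ tloc C q ≠ sloc C p
    · exact ⟨tloc C q, Or.inl rfl, h1.1, h1.2⟩
    · refine ⟨sloc C q, Or.inr rfl, ?_, ?_⟩ <;>
      · intro h2
        rcases hu with rfl | rfl <;> rcases not_and_or.mp h1 with h3 | h3 <;>
          push_neg at h3 <;> first
          | exact hut (h3.symm ▸ rfl)
          | exact hus (h2.symm ▸ rfl)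
          | exact hut h3.symm
          | exact hus h2.symm
          | exact hqsne (h2.trans h3.symm)
  have huC : u ∈ C := by
    rcases hu with rfl | rfl
    · exact (tloc_spec C hne p).1
    · exact (sloc_spec C hC p).1
  have hvC : v ∈ C := by
    rcases hv with rfl | rfl
    · exact (tloc_spec C hne q).1
    · exact (sloc_spec C hC q).1
  have hav : |a - v| < |a - u| := by rcases hv with rfl | rfl <;> assumption
  obtain ⟨hp1, hp2⟩ := pair_sel C hC p u v hu hvC hvt hvs
  obtain ⟨hq1, hq2⟩ := pair_sel C hC q v u hv huC hut hus
  rcases lt_trichotomy u v with huv | huv | huv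
  · rcases h with ⟨h1, h2⟩ | ⟨h1, h2⟩
    · have := abs_mono_aux (le_of_lt huv) h1 (u := v) (v := u) (r1 := a) (r2 := p)
      linarith
    · have := abs_mono_aux (le_of_lt huv) h1 (u := v) (v := u) (r1 := q) (r2 := p)
      have heq : |q - v| = |q - u| := by linarith
      exact absurd (hq2 heq) (not_lt.mpr (le_of_lt huv))
  · exact (by rcases hv with rfl | rfl; exacts [hut huv, hus huv])
  · rcases h with ⟨h1, h2⟩ | ⟨h1, h2⟩
    · have := abs_mono_aux (le_of_lt huv) h2 (u := u) (v := v) (r1 := p) (r2 := q)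
      have heq : |p - u| = |p - v| := by linarith
      exact absurd (hp2 heq) (not_lt.mpr (le_of_lt huv))
    · have := abs_mono_aux (le_of_lt huv) h2 (u := u) (v := v) (r1 := p) (r2 := a)
      linarith

/-- Placing two facilities at the two candidate locations closest to the median of the
reported positions is strategyproof for agents whose cost is the maximum of their
distances to the two facilities. -/
theorem median_two_closest_strategyproof
    {ι : Type*} [Fintype ι] [DecidableEq ι] [Nonempty ι]
    (C : Finset ℝ) (hC : 2 ≤ C.card)
    (x : ι → ℝ) (i : ι) (x' : ℝ) :
    max |x i - tloc C (medOf (Finset.univ.val.map x))|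
        |x i - sloc C (medOf (Finset.univ.val.map x))| ≤
      max |x i - tloc C (medOf (Finset.univ.val.map (Function.update x i x')))|
          |x i - sloc C (medOf (Finset.univ.val.map (Function.update x i x')))| := by
  classical
  set r : Multiset ι := Finset.univ.val.erase i with hr
  have hiu : i ∈ Finset.univ.val := Finset.mem_univ_val i
  have hdecomp : Finset.univ.val = i ::ₘ r := (Multiset.cons_erase hiu).symm
  have hl : Finset.univ.val.map x = x i ::ₘ r.map x := by
    rw [hdecomp, Multiset.map_cons]
  have hl' : Finset.univ.val.map (Function.update x i x') = x' ::ₘ r.map x := by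
    rw [hdecomp, Multiset.map_cons, Function.update_self]
    congr 1
    refine Multiset.map_congr rfl ?_
    intro j hj
    have hnd : (Finset.univ.val : Multiset ι).Nodup := Finset.univ.nodup
    have hji : j ≠ i := by
      rw [hr] at hj
      exact (Multiset.Nodup.mem_erase_iff hnd).mp hj |>.1
    exact Function.update_of_ne hji _ _
  set a := x i with ha
  set m := medOf (Finset.univ.val.map x) with hm
  set m' := medOf (Finset.univ.val.map (Function.update x i x')) with hm'
  have hmcons : m = medOf (a ::ₘ r.map x) := by rw [hm, hl]
  have hmcons' : m' = medOf (x' ::ₘ r.map x) := by rw [hm', hl']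
  rcases le_total a m with h1 | h1
  · rcases le_total m m' with h2 | h2
    · exact core C hC a m m' (Or.inl ⟨h1, h2⟩)
    · rcases eq_or_lt_of_le h1 with heq | h1'
      · exact core C hC a m m' (Or.inr ⟨h2, heq.ge⟩)
      · have hge : m ≤ m' := by
          rw [hmcons, hmcons']
          exact medOf_replace_lt _ _ _ (hmcons ▸ h1')
        have : m = m' := le_antisymm hge h2
        rw [this]
  · rcases le_total m' m with h2 | h2
    · exact core C hC a m m' (Or.inr ⟨h2, h1⟩)
    · rcases eq_or_lt_of_le h1 with heq | h1'
      · exact core C hC a m m' (Or.inl ⟨heq.ge, h2⟩)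
      · have hle : m' ≤ m := by
          rw [hmcons, hmcons']
          exact medOf_replace_gt _ _ _ (hmcons ▸ h1')
        have : m = m' := le_antisymm h2 hle
        rw [this]
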